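/- Suppose A ∈ ℝ^{N×d} satisfies RIP at levels s and 2s with constants δ_s, δ_{2s} < 1. Let x ∈ ℝ^d, let U be the set of the s largest-magnitude entries of x, and suppose Ax̃ = 0 fails but instead A x = r for some residual r ∈ ℝ^N. Then ‖x_U‖₂ ≤ (δ_{2s}/(1−δ_s))·(1/√s)·‖x‖₁ + (√(1+δ_s)/(1−δ_s))·‖Ax‖₂. -/

import Mathlib

open Finset Matrix

noncomputable def l1 {ι : Type*} [Fintype ι] (x : ι → ℝ) : ℝ := ∑ i, |x i|

noncomputable def l2 {ι : Type*} [Fintype ι] (x : ι → ℝ) : ℝ := Real.sqrt (∑ i, (x i) ^ 2)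

open scoped Classical in
/-- `x` has at most `m` nonzero entries. -/
def sparse {ι : Type*} [Fintype ι] (m : ℕ) (x : ι → ℝ) : Prop :=
  (Finset.univ.filter (fun i => x i ≠ 0)).card ≤ m

/-- Restricted Isometry Property at level `m` with constant `δ`. -/
def RIP {N d : ℕ} (A : Matrix (Fin N) (Fin d) ℝ) (m : ℕ) (δ : ℝ) : Prop :=
  ∀ x : Fin d → ℝ, sparse m x →
    (1 - δ) * (l2 x) ^ 2 ≤ (l2 (A.mulVec x)) ^ 2 ∧
    (l2 (A.mulVec x)) ^ 2 ≤ (1 + δ) * (l2 x) ^ 2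

/-- Restriction of a vector to the coordinates in `S` (zero elsewhere). -/
def restr {d : ℕ} (S : Finset (Fin d)) (x : Fin d → ℝ) : Fin d → ℝ :=
  fun i => if i ∈ S then x i else 0

namespace StmtAux

variable {ι : Type*} [Fintype ι]

lemma sumsq_nonneg (x : ι → ℝ) : 0 ≤ ∑ i, x i ^ 2 :=
  Finset.sum_nonneg fun i _ => sq_nonneg _

lemma l2_nonneg (x : ι → ℝ) : 0 ≤ l2 x := Real.sqrt_nonneg _

lemma l1_nonneg (x : ι → ℝ) : 0 ≤ l1 x := Finset.sum_nonneg fun i _ => abs_nonneg _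

lemma l2_sq (x : ι → ℝ) : l2 x ^ 2 = ∑ i, x i ^ 2 := Real.sq_sqrt (sumsq_nonneg x)

lemma l2_eq_zero {x : ι → ℝ} (h : l2 x = 0) : x = 0 := by
  have h2 : ∑ i, x i ^ 2 = 0 := by rw [← l2_sq, h]; ring
  funext i
  have := (Finset.sum_eq_zero_iff_of_nonneg (fun i _ => sq_nonneg (x i))).1 h2 i (mem_univ i)
  exact pow_eq_zero_iff (two_ne_zero) |>.1 this

noncomputable def dot (u v : ι → ℝ) : ℝ := ∑ i, u i * v i

lemma dot_self (u : ι → ℝ) : dot u u = l2 u ^ 2 := by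
  rw [l2_sq, dot]; congr 1; funext i; ring

lemma dot_le (u v : ι → ℝ) : dot u v ≤ l2 u * l2 v := by
  calc dot u v ≤ |dot u v| := le_abs_self _
    _ = Real.sqrt ((dot u v) ^ 2) := (Real.sqrt_sq_eq_abs _).symm
    _ ≤ Real.sqrt ((∑ i, u i ^ 2) * ∑ i, v i ^ 2) :=
        Real.sqrt_le_sqrt (Finset.sum_mul_sq_le_sq_mul_sq univ u v)
    _ = l2 u * l2 v := by rw [l2, l2, Real.sqrt_mul (sumsq_nonneg u)]

lemma dot_add_right (u v w : ι → ℝ) : dot u (v + w) = dot u v + dot u w := by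
  simp [dot, Pi.add_apply, mul_add, Finset.sum_add_distrib]

lemma dot_sum_right {κ : Type*} (u : ι → ℝ) (t : Finset κ) (v : κ → ι → ℝ) :
    dot u (∑ j ∈ t, v j) = ∑ j ∈ t, dot u (v j) := by
  simp only [dot, Finset.sum_apply, Finset.mul_sum]
  exact Finset.sum_comm

lemma sparse_of_subset {m : ℕ} {x : ι → ℝ} {S : Finset ι}
    (h : ∀ i, x i ≠ 0 → i ∈ S) (hS : S.card ≤ m) : sparse m x := by
  classical
  unfold sparse
  refine le_trans (Finset.card_le_card (fun i hi => h i (by simpa using hi))) hS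

lemma sparse_restr {d : ℕ} (S : Finset (Fin d)) (x : Fin d → ℝ) {m : ℕ} (hS : S.card ≤ m) :
    sparse m (restr S x) := by
  refine sparse_of_subset (fun i hi => ?_) hS
  by_contra h
  exact hi (by simp [restr, h])

lemma l2_neg {d : ℕ} (x : Fin d → ℝ) : l2 (-x) = l2 x := by
  simp [l2]

lemma l2_smul {d : ℕ} (c : ℝ) (x : Fin d → ℝ) : l2 (c • x) = |c| * l2 x := by
  simp only [l2, Pi.smul_apply, smul_eq_mul, mul_pow, ← Finset.mul_sum]
  rw [Real.sqrt_mul (sq_nonneg c), Real.sqrt_sq_eq_abs]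

lemma sparse_combo {d : ℕ} {s : ℕ} {u v : Fin d → ℝ}
    (hu : sparse s u) (hv : sparse s v) (c e : ℝ) :
    sparse (2 * s) (c • u + e • v) := by
  classical
  have h2 : 2 * s = s + s := two_mul s
  rw [h2]
  refine sparse_of_subset (S := (Finset.univ.filter fun i => u i ≠ 0) ∪
      (Finset.univ.filter fun i => v i ≠ 0)) (fun i hi => ?_) ?_
  · simp only [Finset.mem_union, Finset.mem_filter, Finset.mem_univ, true_and]
    by_contra hcon
    push_neg at hcon
    exact hi (by simp [Pi.add_apply, Pi.smul_apply, hcon.1, hcon.2])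
  · refine le_trans (Finset.card_union_le _ _) (add_le_add ?_ ?_)
    · exact le_trans (le_of_eq (by congr)) hu
    · exact le_trans (le_of_eq (by congr)) hv

lemma rip_dot {N d s : ℕ} (A : Matrix (Fin N) (Fin d) ℝ) {δ : ℝ}
    (hδ : 0 ≤ δ) (hR : RIP A (2 * s) δ) {u v : Fin d → ℝ}
    (hu : sparse s u) (hv : sparse s v)
    (hdisj : ∀ i, u i = 0 ∨ v i = 0) :
    dot (A.mulVec u) (A.mulVec v) ≤ δ * l2 u * l2 v := by
  have hsum0 : ∑ i, u i * v i = 0 :=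
    Finset.sum_eq_zero (fun i _ => by rcases hdisj i with h | h <;> simp [h])
  have hz : l2 (0 : Fin d → ℝ) = 0 := by simp [l2]
  rcases eq_or_lt_of_le (l2_nonneg u) with ha | ha
  · rw [l2_eq_zero ha.symm]
    simp [dot, Matrix.mulVec_zero, hz]
  rcases eq_or_lt_of_le (l2_nonneg v) with hb | hb
  · rw [l2_eq_zero hb.symm]
    simp [dot, Matrix.mulVec_zero, hz]
  set a := l2 u with hadef
  set b := l2 v with hbdef
  have expand : ∀ c e : ℝ, ∑ i, (c * u i + e * v i) ^ 2
      = c ^ 2 * (∑ i, u i ^ 2) + e ^ 2 * (∑ i, v i ^ 2) + 2 * c * e * (∑ i, u i * v i) := by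
    intro c e
    simp only [Finset.mul_sum, ← Finset.sum_add_distrib]
    exact Finset.sum_congr rfl (fun i _ => by ring)
  have hu2 : ∑ i, u i ^ 2 = a ^ 2 := (l2_sq u).symm
  have hv2 : ∑ i, v i ^ 2 = b ^ 2 := (l2_sq v).symm
  have hwp : l2 (b • u + a • v) ^ 2 = 2 * (a * b) ^ 2 := by
    rw [l2_sq]
    have := expand b a
    simp only [Pi.add_apply, Pi.smul_apply, smul_eq_mul]
    rw [this, hu2, hv2, hsum0]; ring
  have hwm : l2 (b • u + (-a) • v) ^ 2 = 2 * (a * b) ^ 2 := by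
    rw [l2_sq]
    have := expand b (-a)
    simp only [Pi.add_apply, Pi.smul_apply, smul_eq_mul]
    rw [this, hu2, hv2, hsum0]; ring
  have hsp : sparse (2 * s) (b • u + a • v) := sparse_combo hu hv b a
  have hsm : sparse (2 * s) (b • u + (-a) • v) := sparse_combo hu hv b (-a)
  have hrp := (hR _ hsp).2
  have hrm := (hR _ hsm).1
  rw [hwp] at hrp
  rw [hwm] at hrm
  have hAp : A.mulVec (b • u + a • v) = b • A.mulVec u + a • A.mulVec v := by
    rw [Matrix.mulVec_add, Matrix.mulVec_smul, Matrix.mulVec_smul]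
  have hAm : A.mulVec (b • u + (-a) • v) = b • A.mulVec u - a • A.mulVec v := by
    rw [Matrix.mulVec_add, Matrix.mulVec_smul, Matrix.mulVec_smul]
    funext k; simp; ring
  rw [hAp] at hrp
  rw [hAm] at hrm
  have pol : l2 (b • A.mulVec u + a • A.mulVec v) ^ 2
      - l2 (b • A.mulVec u - a • A.mulVec v) ^ 2
      = 4 * (a * b) * dot (A.mulVec u) (A.mulVec v) := by
    rw [l2_sq, l2_sq, dot, Finset.mul_sum, ← Finset.sum_sub_distrib]
    exact Finset.sum_congr rfl (fun k _ => by
      simp only [Pi.add_apply, Pi.sub_apply, Pi.smul_apply, smul_eq_mul]; ring)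
  nlinarith [mul_pos ha hb, pol, hrp, hrm]

lemma sum_abs_restr {d : ℕ} (S : Finset (Fin d)) (x : Fin d → ℝ) :
    l1 (restr S x) = ∑ i ∈ S, |x i| := by
  rw [l1, ← Finset.sum_subset (Finset.subset_univ S)
    (fun i _ hi => by simp [restr, hi])]
  exact Finset.sum_congr rfl (fun i hi => by simp [restr, hi])

lemma sum_sq_restr {d : ℕ} (S : Finset (Fin d)) (x : Fin d → ℝ) :
    ∑ i, (restr S x i) ^ 2 = ∑ i ∈ S, (x i) ^ 2 := by
  rw [← Finset.sum_subset (Finset.subset_univ S)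
    (fun i _ hi => by simp [restr, hi])]
  exact Finset.sum_congr rfl (fun i hi => by simp [restr, hi])

lemma block_l2_le {d s : ℕ} (hs : 0 < s) (x : Fin d → ℝ) (S T : Finset (Fin d))
    (hS : S.card ≤ s) (hT : T.card = s)
    (hle : ∀ i ∈ S, ∀ k ∈ T, |x i| ≤ |x k|) :
    l2 (restr S x) ≤ (1 / Real.sqrt s) * l1 (restr T x) := by
  set M := ∑ k ∈ T, |x k| with hMdef
  have hM0 : 0 ≤ M := Finset.sum_nonneg fun k _ => abs_nonneg _
  have hs' : (0 : ℝ) < s := by exact_mod_cast hs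
  have hbound : ∀ i ∈ S, |x i| ≤ M / s := by
    intro i hi
    rw [le_div_iff₀ hs']
    calc |x i| * s = ∑ _k ∈ T, |x i| := by
          rw [Finset.sum_const, hT, nsmul_eq_mul, mul_comm]
      _ ≤ M := Finset.sum_le_sum (fun k hk => hle i hi k hk)
  have hsum : ∑ i, (restr S x i) ^ 2 ≤ M ^ 2 / s := by
    rw [sum_sq_restr]
    calc ∑ i ∈ S, (x i) ^ 2 ≤ ∑ i ∈ S, (M / s) ^ 2 := by
          refine Finset.sum_le_sum (fun i hi => ?_)
          have := hbound i hi
          calc (x i) ^ 2 = |x i| ^ 2 := (sq_abs _).symm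
            _ ≤ (M / s) ^ 2 := pow_le_pow_left₀ (abs_nonneg _) this 2
      _ = S.card * (M / s) ^ 2 := by rw [Finset.sum_const, nsmul_eq_mul]
      _ ≤ s * (M / s) ^ 2 := by
          refine mul_le_mul_of_nonneg_right ?_ (sq_nonneg _)
          exact_mod_cast hS
      _ = M ^ 2 / s := by field_simp
  have : l2 (restr S x) ≤ Real.sqrt (M ^ 2 / s) := Real.sqrt_le_sqrt hsum
  calc l2 (restr S x) ≤ Real.sqrt (M ^ 2 / s) := this
    _ = M / Real.sqrt s := by
        rw [Real.sqrt_div (sq_nonneg M), Real.sqrt_sq hM0]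
    _ = (1 / Real.sqrt s) * l1 (restr T x) := by
        rw [sum_abs_restr]; ring

lemma div_eq_self {j k s : ℕ} (h1 : j * s ≤ k) (h2 : k < j * s + s) : k / s = j :=
  Nat.div_eq_of_lt_le (by linarith) (by rw [Nat.succ_mul]; omega)

lemma shelling {d s : ℕ} (hs : 0 < s) (x : Fin d → ℝ) (U : Finset (Fin d)) :
    ∃ (J : ℕ) (B : ℕ → Finset (Fin d)),
      (∀ j, B j ⊆ Uᶜ) ∧
      (∀ j, (B j).card ≤ s) ∧
      (∀ i, restr Uᶜ x i = ∑ j ∈ Finset.range J, restr (B j) x i) ∧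
      ((∑ j ∈ Finset.range J, ∑ i ∈ B j, |x i|) ≤ ∑ i ∈ Uᶜ, |x i|) ∧
      (∀ j, (B (j + 1)).Nonempty → (B j).card = s) ∧
      (∀ j i k, i ∈ B (j + 1) → k ∈ B j → |x i| ≤ |x k|) := by
  classical
  set n := Uᶜ.card with hn
  set e := Uᶜ.orderIsoOfFin hn.symm with he
  set f : Fin n → ℝ := fun k => -|x (e k : Fin d)| with hf
  set σ := Tuple.sort f with hσ
  set g : Fin n → Fin d := fun k => (e (σ k) : Fin d) with hg
  have hmono : ∀ a b : Fin n, a ≤ b → |x (g b)| ≤ |x (g a)| := by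
    intro a b hab
    have h := Tuple.monotone_sort f hab
    simp only [Function.comp, hf] at h
    rw [hg]
    exact neg_le_neg_iff.mp h
  have hginj : Function.Injective g := by
    intro a b hab
    have h1 : e (σ a) = e (σ b) := Subtype.ext hab
    exact σ.injective (e.injective h1)
  have hgmem : ∀ k, g k ∈ Uᶜ := fun k => (e (σ k)).2
  set I : ℕ → Finset (Fin n) :=
    fun j => Finset.univ.filter (fun k => j * s ≤ (k : ℕ) ∧ (k : ℕ) < j * s + s) with hI
  set B : ℕ → Finset (Fin d) := fun j => (I j).image g with hB
  have hmemB : ∀ (j : ℕ) (i : Fin d),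
      i ∈ B j ↔ ∃ k : Fin n, g k = i ∧ j * s ≤ (k : ℕ) ∧ (k : ℕ) < j * s + s := by
    intro j i
    simp only [hB, hI, Finset.mem_image, Finset.mem_filter, Finset.mem_univ, true_and]
    constructor
    · rintro ⟨k, ⟨h1, h2⟩, h3⟩; exact ⟨k, h3, h1, h2⟩
    · rintro ⟨k, h3, h1, h2⟩; exact ⟨k, ⟨h1, h2⟩, h3⟩
  have hsub : ∀ j, B j ⊆ Uᶜ := by
    intro j i hi
    obtain ⟨k, hk, -⟩ := (hmemB j i).1 hi
    exact hk ▸ hgmem k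
  have hIcard : ∀ j, (I j).card ≤ s := by
    intro j
    have h := Finset.card_le_card_of_injOn (fun k : Fin n => (k : ℕ) - j * s)
      (s := I j) (t := Finset.range s)
      (fun k hk => by
        simp only [Finset.mem_coe, hI, Finset.mem_filter, Finset.mem_univ, true_and] at hk
        simp only [Finset.mem_coe, Finset.mem_range]; omega)
      (fun k1 h1 k2 h2 hkk => by
        simp only [hI, Finset.coe_filter, Set.mem_setOf_eq] at h1 h2
        simp only at hkk
        exact Fin.ext (by omega))
    simpa using h
  have hcard : ∀ j, (B j).card ≤ s :=
    fun j => le_trans Finset.card_image_le (hIcard j)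
  have hdisj : ∀ (j1 j2 : ℕ), j1 ≠ j2 → Disjoint (B j1) (B j2) := by
    intro j1 j2 hne
    rw [Finset.disjoint_left]
    intro i hi1 hi2
    obtain ⟨k1, hk1, ha1, hb1⟩ := (hmemB j1 i).1 hi1
    obtain ⟨k2, hk2, ha2, hb2⟩ := (hmemB j2 i).1 hi2
    have : k1 = k2 := hginj (by rw [hk1, hk2])
    subst this
    exact hne ((div_eq_self ha1 hb1).symm.trans (div_eq_self ha2 hb2))
  refine ⟨n / s + 1, B, hsub, hcard, ?_, ?_, ?_, ?_⟩
  · -- pointwise decomposition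
    intro i
    by_cases hiU : i ∈ Uᶜ
    · obtain ⟨k, hk⟩ : ∃ k, g k = i := ⟨σ.symm (e.symm ⟨i, hiU⟩), by simp [hg]⟩
      have hkmem : i ∈ B ((k : ℕ) / s) := by
        rw [hmemB]
        refine ⟨k, hk, Nat.div_mul_le_self _ _, ?_⟩
        have h1 := Nat.div_add_mod (k : ℕ) s
        have h2 := Nat.mod_lt (k : ℕ) hs
        have h3 : (k : ℕ) / s * s = s * ((k : ℕ) / s) := Nat.mul_comm _ _
        omega
      have hrange : (k : ℕ) / s ∈ Finset.range (n / s + 1) := by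
        rw [Finset.mem_range]
        have : (k : ℕ) / s ≤ n / s := Nat.div_le_div_right (le_of_lt k.2)
        omega
      rw [Finset.sum_eq_single ((k : ℕ) / s)]
      · simp only [restr, hiU, if_pos, hkmem]
      · intro j hj hne
        have : i ∉ B j := Finset.disjoint_right.mp (hdisj j _ hne) hkmem
        simp [restr, this]
      · intro habs
        exact absurd hrange habs
    · have h0 : ∀ j, restr (B j) x i = 0 := by
        intro j
        have : i ∉ B j := fun h => hiU (hsub j h)
        simp [restr, this]
      rw [show restr Uᶜ x i = 0 from by simp [restr, hiU]]
      exact (Finset.sum_eq_zero (fun j _ => h0 j)).symm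
  · -- l1 sum bound
    have hpd : ((Finset.range (n / s + 1) : Finset ℕ) : Set ℕ).PairwiseDisjoint B :=
      fun j1 _ j2 _ hne => hdisj j1 j2 hne
    rw [← Finset.sum_biUnion hpd]
    refine Finset.sum_le_sum_of_subset_of_nonneg ?_ (fun i _ _ => abs_nonneg _)
    intro i hi
    rw [Finset.mem_biUnion] at hi
    obtain ⟨j, -, hj⟩ := hi
    exact hsub j hj
  · -- full blocks
    intro j ⟨i, hi⟩
    obtain ⟨k, -, hk1, hk2⟩ := (hmemB (j + 1) i).1 hi
    have hfull : j * s + s ≤ n := by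
      have := k.2
      have h3 : (j + 1) * s = j * s + s := by ring
      omega
    have hIfull : (I j).card = s := by
      rw [← Finset.card_range s]
      refine Finset.card_bij' (fun k _ => (k : ℕ) - j * s)
        (fun t ht => (⟨j * s + t, by rw [Finset.mem_range] at ht; omega⟩ : Fin n)) ?_ ?_ ?_ ?_
      · intro a ha
        simp only [hI, Finset.mem_filter, Finset.mem_univ, true_and] at ha
        rw [Finset.mem_range]
        show (a : ℕ) - j * s < s
        omega
      · intro t ht
        rw [Finset.mem_range] at ht
        simp only [hI, Finset.mem_filter, Finset.mem_univ, true_and]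
        exact ⟨by omega, by omega⟩
      · intro a ha
        simp only [hI, Finset.mem_filter, Finset.mem_univ, true_and] at ha
        exact Fin.ext (by show j * s + ((a : ℕ) - j * s) = (a : ℕ); omega)
      · intro t ht
        rw [Finset.mem_range] at ht
        show j * s + t - j * s = t
        omega
    rw [hB]
    rw [Finset.card_image_of_injOn (Function.Injective.injOn hginj)]
    exact hIfull
  · -- ordering
    intro j i k hi hk
    obtain ⟨a, ha, ha1, ha2⟩ := (hmemB (j + 1) i).1 hi
    obtain ⟨b, hb, hb1, hb2⟩ := (hmemB j k).1 hk
    have hba : b ≤ a := by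
      have h3 : (j + 1) * s = j * s + s := by ring
      exact Fin.le_def.mpr (by omega)
    rw [← ha, ← hb]
    exact hmono b a hba

lemma sparse_neg {m : ℕ} {y : ι → ℝ} (h : sparse m y) : sparse m (-y) := by
  classical
  refine sparse_of_subset (S := Finset.univ.filter fun i => y i ≠ 0) (fun i hi => ?_) ?_
  · simp only [Finset.mem_filter, Finset.mem_univ, true_and]
    simpa using hi
  · exact le_trans (le_of_eq (by congr)) h

lemma dot_neg_right (u w : ι → ℝ) : dot u (-w) = -dot u w := by
  simp [dot, Finset.sum_neg_distrib]

end StmtAux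

open StmtAux

theorem stmt10 {N d s : ℕ} (A : Matrix (Fin N) (Fin d) ℝ)
    (δs δ2s : ℝ) (hδs0 : 0 ≤ δs) (hδs1 : δs < 1) (hδ2s0 : 0 ≤ δ2s) (hδ2s1 : δ2s < 1)
    (hRs : RIP A s δs) (hR2s : RIP A (2 * s) δ2s)
    (x : Fin d → ℝ) (U : Finset (Fin d)) (hUcard : U.card = s)
    (hUmax : ∀ i ∈ U, ∀ j ∉ U, |x j| ≤ |x i|) :
    l2 (restr U x) ≤ (δ2s / (1 - δs)) * (1 / Real.sqrt s) * l1 x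
      + (Real.sqrt (1 + δs) / (1 - δs)) * l2 (A.mulVec x) := by
  classical
  have h1δ : (0:ℝ) < 1 - δs := by linarith
  have hRHS0 : 0 ≤ (δ2s / (1 - δs)) * (1 / Real.sqrt s) * l1 x
      + (Real.sqrt (1 + δs) / (1 - δs)) * l2 (A.mulVec x) := by
    refine add_nonneg (mul_nonneg (mul_nonneg (div_nonneg hδ2s0 (le_of_lt h1δ))
      (by positivity)) (l1_nonneg x))
      (mul_nonneg (div_nonneg (Real.sqrt_nonneg _) (le_of_lt h1δ)) (l2_nonneg _))
  rcases Nat.eq_zero_or_pos s with hs0 | hs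
  · have hU : U = ∅ := Finset.card_eq_zero.1 (by rw [hUcard, hs0])
    have hz : l2 (restr U x) = 0 := by subst hU; simp [l2, restr]
    rw [hz]; exact hRHS0
  obtain ⟨J, B, hBsub, hBcard, hBdec, hBl1, hBfull, hBord⟩ := shelling hs x U
  set u := restr U x with hudef
  set v : ℕ → Fin d → ℝ := fun j => restr (B j) x with hvdef
  have hssqrt : (0:ℝ) < Real.sqrt s := Real.sqrt_pos.2 (by exact_mod_cast hs)
  -- sum of block l2 norms
  have hsum_l2 : ∑ j ∈ Finset.range J, l2 (v j) ≤ (1 / Real.sqrt s) * l1 x := by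
    have hrhs_nn : 0 ≤ (1 / Real.sqrt s) * l1 x :=
      mul_nonneg (by positivity) (l1_nonneg x)
    rcases J with - | m
    · simpa using hrhs_nn
    rw [Finset.sum_range_succ']
    have h0 : l2 (v 0) ≤ (1 / Real.sqrt s) * l1 u := by
      refine block_l2_le hs x (B 0) U (hBcard 0) hUcard (fun i hi k hk => ?_)
      exact hUmax k hk i (Finset.mem_compl.1 (hBsub 0 hi))
    have hsucc : ∀ j, l2 (v (j + 1)) ≤ (1 / Real.sqrt s) * l1 (restr (B j) x) := by
      intro j
      by_cases hne : (B (j + 1)).Nonempty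
      · exact block_l2_le hs x (B (j + 1)) (B j) (hBcard _) (hBfull j hne)
          (fun i hi k hk => hBord j i k hi hk)
      · rw [Finset.not_nonempty_iff_eq_empty] at hne
        have hz : l2 (v (j + 1)) = 0 := by simp [hvdef, hne, restr, l2]
        rw [hz]
        exact mul_nonneg (by positivity) (l1_nonneg _)
    calc (∑ j ∈ Finset.range m, l2 (v (j + 1))) + l2 (v 0)
        ≤ (∑ j ∈ Finset.range m, (1 / Real.sqrt s) * l1 (restr (B j) x))
            + (1 / Real.sqrt s) * l1 u :=
          add_le_add (Finset.sum_le_sum fun j _ => hsucc j) h0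
      _ = (1 / Real.sqrt s) * ((∑ j ∈ Finset.range m, l1 (restr (B j) x)) + l1 u) := by
          rw [mul_add, Finset.mul_sum]
      _ ≤ (1 / Real.sqrt s) * l1 x := by
          refine mul_le_mul_of_nonneg_left ?_ (by positivity)
          have e1 : ∀ j, l1 (restr (B j) x) = ∑ i ∈ B j, |x i| := fun j => sum_abs_restr _ _
          have e2 : l1 u = ∑ i ∈ U, |x i| := sum_abs_restr _ _
          have h3 : (∑ j ∈ Finset.range m, ∑ i ∈ B j, |x i|)
              ≤ ∑ j ∈ Finset.range (m + 1), ∑ i ∈ B j, |x i| := by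
            refine Finset.sum_le_sum_of_subset_of_nonneg
              (Finset.range_subset_range.2 (Nat.le_succ m))
              (fun j _ _ => Finset.sum_nonneg fun i _ => abs_nonneg _)
          have h4 := hBl1
          have h5 : (∑ i ∈ U, |x i|) + ∑ i ∈ Uᶜ, |x i| = l1 x := by
            rw [l1]
            exact Finset.sum_add_sum_compl U _
          simp only [e1, e2]
          linarith
  -- sparsity facts
  have hu_sp : sparse s u := sparse_restr U x (le_of_eq hUcard)
  -- decomposition of A x
  have hAx : A.mulVec x = A.mulVec u + ∑ j ∈ Finset.range J, A.mulVec (v j) := by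
    have hxdec : x = u + ∑ j ∈ Finset.range J, v j := by
      funext i
      have h1 : restr Uᶜ x i = ∑ j ∈ Finset.range J, restr (B j) x i := hBdec i
      have h2 : x i = restr U x i + restr Uᶜ x i := by
        by_cases hiU : i ∈ U <;> simp [restr, hiU]
      rw [h2, h1]
      simp [Finset.sum_apply, hvdef, hudef]
    calc A.mulVec x = A.mulVec (u + ∑ j ∈ Finset.range J, v j) := by rw [← hxdec]
      _ = A.mulVec u + A.mulVec (∑ j ∈ Finset.range J, v j) := Matrix.mulVec_add _ _ _
      _ = A.mulVec u + ∑ j ∈ Finset.range J, A.mulVec (v j) := by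
          congr 1
          rw [show A.mulVec (∑ j ∈ Finset.range J, v j)
              = A.mulVecLin (∑ j ∈ Finset.range J, v j) from rfl, map_sum]
          rfl
  have hdot : dot (A.mulVec u) (A.mulVec x)
      = l2 (A.mulVec u) ^ 2 + ∑ j ∈ Finset.range J, dot (A.mulVec u) (A.mulVec (v j)) := by
    rw [hAx, dot_add_right, dot_self, dot_sum_right]
  have hcross : ∀ j, -dot (A.mulVec u) (A.mulVec (v j)) ≤ δ2s * l2 u * l2 (v j) := by
    intro j
    have hvsp : sparse s (-(v j)) := sparse_neg (sparse_restr _ x (hBcard j))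
    have hdisj' : ∀ i, u i = 0 ∨ (-(v j)) i = 0 := by
      intro i
      by_cases hiU : i ∈ U
      · right
        have : i ∉ B j := fun h => (Finset.mem_compl.1 (hBsub j h)) hiU
        simp [hvdef, restr, this]
      · left
        simp [hudef, restr, hiU]
    have h := rip_dot A hδ2s0 hR2s hu_sp hvsp hdisj'
    rw [Matrix.mulVec_neg, dot_neg_right, l2_neg] at h
    exact h
  have hCauchy : dot (A.mulVec u) (A.mulVec x)
      ≤ Real.sqrt (1 + δs) * l2 u * l2 (A.mulVec x) := by
    have h1 := dot_le (A.mulVec u) (A.mulVec x)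
    have h2 : l2 (A.mulVec u) ≤ Real.sqrt (1 + δs) * l2 u := by
      have h3 := (hRs u hu_sp).2
      calc l2 (A.mulVec u) = Real.sqrt (l2 (A.mulVec u) ^ 2) :=
            (Real.sqrt_sq (l2_nonneg _)).symm
        _ ≤ Real.sqrt ((1 + δs) * l2 u ^ 2) := Real.sqrt_le_sqrt h3
        _ = Real.sqrt (1 + δs) * l2 u := by
            rw [Real.sqrt_mul (by linarith), Real.sqrt_sq (l2_nonneg u)]
    exact le_trans h1 (mul_le_mul_of_nonneg_right h2 (l2_nonneg _))
  have hkey : (1 - δs) * l2 u ^ 2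
      ≤ l2 u * (Real.sqrt (1 + δs) * l2 (A.mulVec x) + δ2s * ((1 / Real.sqrt s) * l1 x)) := by
    have hrip := (hRs u hu_sp).1
    have e1 : l2 (A.mulVec u) ^ 2 = dot (A.mulVec u) (A.mulVec x)
        - ∑ j ∈ Finset.range J, dot (A.mulVec u) (A.mulVec (v j)) := by
      rw [hdot]; ring
    have e2 : -(∑ j ∈ Finset.range J, dot (A.mulVec u) (A.mulVec (v j)))
        ≤ δ2s * l2 u * ∑ j ∈ Finset.range J, l2 (v j) := by
      rw [← Finset.sum_neg_distrib, Finset.mul_sum]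
      exact Finset.sum_le_sum fun j _ => hcross j
    have e3 : δ2s * l2 u * (∑ j ∈ Finset.range J, l2 (v j))
        ≤ δ2s * l2 u * ((1 / Real.sqrt s) * l1 x) :=
      mul_le_mul_of_nonneg_left hsum_l2 (mul_nonneg hδ2s0 (l2_nonneg u))
    calc (1 - δs) * l2 u ^ 2 ≤ l2 (A.mulVec u) ^ 2 := hrip
      _ = dot (A.mulVec u) (A.mulVec x)
          - ∑ j ∈ Finset.range J, dot (A.mulVec u) (A.mulVec (v j)) := e1
      _ ≤ Real.sqrt (1 + δs) * l2 u * l2 (A.mulVec x)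
          + δ2s * l2 u * ((1 / Real.sqrt s) * l1 x) := by linarith
      _ = l2 u * (Real.sqrt (1 + δs) * l2 (A.mulVec x)
          + δ2s * ((1 / Real.sqrt s) * l1 x)) := by ring
  rcases eq_or_lt_of_le (l2_nonneg u) with h0 | h0
  · rw [← h0]
    exact hRHS0
  have hlin : (1 - δs) * l2 u
      ≤ Real.sqrt (1 + δs) * l2 (A.mulVec x) + δ2s * ((1 / Real.sqrt s) * l1 x) := by
    nlinarith [hkey, h0]
  have hgoal : l2 u ≤ (Real.sqrt (1 + δs) * l2 (A.mulVec x)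
      + δ2s * ((1 / Real.sqrt s) * l1 x)) / (1 - δs) := by
    rw [le_div_iff₀ h1δ]
    nlinarith [hlin]
  refine le_trans hgoal (le_of_eq ?_)
  field_simp
  ring
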